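/- arXiv:2505.05264 — 2 statements merged into one kernel-verified Lean document; each statement's English description precedes it below -/
import Mathlib

section
/- For every n ≥ 3, there exists an S_{n-1,n-1}-free subgraph of the hypercube Q_n with exactly 2^{n-3}·(4n-3) edges. Moreover, there exist two such subgraphs G_n and G_n' such that no vertex has degree n in both G_n and G_n'. -/
open SimpleGraph

/-- The `n`-dimensional hypercube: vertices are `{0,1}^n`, adjacent iff they
differ in exactly one coordinate (Hamming distance 1). -/
def cube (n : ℕ) : SimpleGraph (Fin n → Bool) where
  Adj x y := hammingDist x y = 1
  symm := ⟨fun x y (h : hammingDist x y = 1) => (hammingDist_comm y x).trans h⟩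
  loopless := ⟨fun x (h : hammingDist x x = 1) => by simp [hammingDist_self] at h⟩

/-- The double star `S_{k,l}`: an edge `uv` (here `Sum.inl none` and
`Sum.inr none`) with `k` leaves attached to `u` and `l` further leaves
attached to `v`. -/
def doubleStar (k l : ℕ) : SimpleGraph (Option (Fin k) ⊕ Option (Fin l)) :=
  SimpleGraph.fromRel (fun a b =>
    (a = Sum.inl none ∧ b = Sum.inr none) ∨
    (a = Sum.inl none ∧ ∃ i, b = Sum.inl (some i)) ∨
    (a = Sum.inr none ∧ ∃ j, b = Sum.inr (some j)))

/-- `G` contains `H` as a (not necessarily induced) subgraph. -/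
def Contains {α β : Type*} (G : SimpleGraph α) (H : SimpleGraph β) : Prop :=
  ∃ f : β ↪ α, ∀ a b, H.Adj a b → G.Adj (f a) (f b)

/-- The Turán number of `H` in the hypercube `Q_n`: the maximum number of
edges of an `H`-free subgraph of `Q_n`. -/
noncomputable def exQ (n : ℕ) {β : Type*} (H : SimpleGraph β) : ℕ :=
  sSup {m | ∃ G : SimpleGraph (Fin n → Bool),
    G ≤ cube n ∧ ¬ Contains G H ∧ G.edgeSet.ncard = m}

/-- Number of coordinates equal to `1` (Hamming weight). -/
def wt {n : ℕ} (x : Fin n → Bool) : ℕ := hammingDist x (fun _ => false)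

namespace Stmt5Aux

abbrev T3 := Bool × Bool × Bool

def flipT (k : Fin 3) (t : T3) : T3 :=
  match k with
  | 0 => (!t.1, t.2.1, t.2.2)
  | 1 => (t.1, !t.2.1, t.2.2)
  | 2 => (t.1, t.2.1, !t.2.2)

def mOf : Bool → T3 → Option T3
  | false, (false,false,true)  => some (false,true,true)
  | false, (false,true,true)   => some (false,false,true)
  | false, (false,true,false)  => some (true,true,false)
  | false, (true,true,false)   => some (false,true,false)
  | false, (true,false,false)  => some (true,false,true)
  | false, (true,false,true)   => some (true,false,false)
  | false, _ => none
  | true, (false,false,false)  => some (false,false,true)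
  | true, (false,false,true)   => some (false,false,false)
  | true, (false,true,false)   => some (true,true,false)
  | true, (true,true,false)    => some (false,true,false)
  | true, (true,false,true)    => some (true,true,true)
  | true, (true,true,true)     => some (true,false,true)
  | true, _ => none

lemma mOf_ne_self : ∀ b t, mOf b t ≠ some t := by decide
lemma mOf_symm : ∀ b t s, mOf b t = some s ↔ mOf b s = some t := by decide
lemma mOf_not_both : ∀ b t, ¬(mOf b t = none ∧ mOf (!b) t = none) := by decide
lemma mOf_not_adj : ∀ b t k, ¬(mOf b t = none ∧ mOf b (flipT k t) = none) := by decide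
lemma mOf_none_iff : ∀ b t, (mOf b t = none) ↔ (t.1 = xor b t.2.2 ∧ t.2.1 = t.2.2) := by
  decide
lemma card_filterT : ∀ b t,
    ((Finset.univ.filter (fun k : Fin 3 => mOf b t = some (flipT k t))).card
      = if (mOf b t).isSome then 1 else 0) := by decide

variable {m : ℕ}

abbrev V (m : ℕ) := Fin (m+3) → Bool

def i0 : Fin (m+3) := ⟨0, by omega⟩
def i1 : Fin (m+3) := ⟨1, by omega⟩
def i2 : Fin (m+3) := ⟨2, by omega⟩

def tri (v : V m) : T3 := (v i0, v i1, v i2)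

def par (v : V m) : Bool :=
  (Finset.univ.filter fun i : Fin (m+3) => 3 ≤ (i:ℕ) ∧ v i = true).card % 2 == 1

def flip (i : Fin (m+3)) (v : V m) : V m := Function.update v i (!v i)

lemma flip_apply_self (i : Fin (m+3)) (v : V m) : flip i v i = !v i := by
  simp [flip]

lemma flip_apply_ne {i j : Fin (m+3)} (h : j ≠ i) (v : V m) : flip i v j = v j := by
  simp [flip, Function.update_of_ne h]

lemma flip_flip (i : Fin (m+3)) (v : V m) : flip i (flip i v) = v := by
  funext j
  by_cases h : j = i
  · subst h; simp [flip]
  · simp [flip, Function.update_of_ne h]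

lemma hamming_flip (i : Fin (m+3)) (v : V m) : hammingDist v (flip i v) = 1 := by
  have : (Finset.univ.filter fun j => v j ≠ flip i v j) = {i} := by
    ext j
    by_cases h : j = i
    · subst h; simp [flip_apply_self]
    · simp [flip_apply_ne h, h]
  rw [hammingDist]
  simp only [this, Finset.card_singleton]

lemma hamming_one_iff {v w : V m} : hammingDist v w = 1 ↔ ∃ i, w = flip i v := by
  constructor
  · intro h
    rw [hammingDist, Finset.card_eq_one] at h
    obtain ⟨i, hi⟩ := h
    refine ⟨i, funext fun j => ?_⟩
    by_cases hj : j = i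
    · subst hj
      have : v j ≠ w j := by
        have : j ∈ ({j} : Finset _) := Finset.mem_singleton_self j
        rw [← hi, Finset.mem_filter] at this
        exact this.2
      rw [flip_apply_self]
      cases hv : v j <;> cases hw : w j <;> simp_all
    · have : j ∉ Finset.univ.filter fun j => v j ≠ w j := by
        rw [hi]; simpa using hj
      rw [Finset.mem_filter] at this
      push_neg at this
      rw [flip_apply_ne hj]
      exact (this (Finset.mem_univ j)).symm
  · rintro ⟨i, rfl⟩; exact hamming_flip i v

lemma par_flip_lt {i : Fin (m+3)} (h : (i:ℕ) < 3) (v : V m) : par (flip i v) = par v := by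
  unfold par
  have heq : (Finset.univ.filter fun j : Fin (m+3) => 3 ≤ (j:ℕ) ∧ flip i v j = true)
      = Finset.univ.filter fun j : Fin (m+3) => 3 ≤ (j:ℕ) ∧ v j = true := by
    apply Finset.filter_congr
    intro j _
    by_cases hj : j = i
    · subst hj; simp; omega
    · rw [flip_apply_ne hj]
  rw [heq]

lemma par_flip_ge {i : Fin (m+3)} (h : 3 ≤ (i:ℕ)) (v : V m) : par (flip i v) = !par v := by
  unfold par
  set S := Finset.univ.filter fun j : Fin (m+3) => 3 ≤ (j:ℕ) ∧ v j = true with hS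
  have hfilter : (Finset.univ.filter fun j : Fin (m+3) => 3 ≤ (j:ℕ) ∧ flip i v j = true)
      = if v i = true then S.erase i else insert i S := by
    ext j
    by_cases hj : j = i
    · subst hj
      simp [flip_apply_self, hS, h]
      cases hv : v j <;> simp [hv]
    · rw [Finset.mem_filter, flip_apply_ne hj]
      cases hv : v i <;> simp [hv, hS, Finset.mem_erase, Finset.mem_filter, hj]
  rw [hfilter]
  by_cases hv : v i = true
  · have hiS : i ∈ S := by simp [hS, h, hv]
    rw [if_pos hv, Finset.card_erase_of_mem hiS]
    have : 1 ≤ S.card := Finset.card_pos.2 ⟨i, hiS⟩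
    rcases Nat.even_or_odd S.card with he | ho
    · obtain ⟨k, hk⟩ := he
      have h2 : S.card % 2 = 0 := by omega
      have h3 : (S.card - 1) % 2 = 1 := by omega
      simp [h2, h3]
    · obtain ⟨k, hk⟩ := ho
      have h2 : S.card % 2 = 1 := by omega
      have h3 : (S.card - 1) % 2 = 0 := by omega
      simp [h2, h3]
  · have hiS : i ∉ S := by simp [hS, hv]
    rw [if_neg hv, Finset.card_insert_of_notMem hiS]
    rcases Nat.even_or_odd S.card with he | ho
    · obtain ⟨k, hk⟩ := he
      have h2 : S.card % 2 = 0 := by omega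
      have h3 : (S.card + 1) % 2 = 1 := by omega
      simp [h2, h3]
    · obtain ⟨k, hk⟩ := ho
      have h2 : S.card % 2 = 1 := by omega
      have h3 : (S.card + 1) % 2 = 0 := by omega
      simp [h2, h3]

lemma tri_flip_ge {i : Fin (m+3)} (h : 3 ≤ (i:ℕ)) (v : V m) : tri (flip i v) = tri v := by
  unfold tri
  rw [flip_apply_ne, flip_apply_ne, flip_apply_ne]
  · intro he; rw [Fin.ext_iff] at he; simp [i2] at he; omega
  · intro he; rw [Fin.ext_iff] at he; simp [i1] at he; omega
  · intro he; rw [Fin.ext_iff] at he; simp [i0] at he; omega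

lemma tri_flip_lt {i : Fin (m+3)} (h : (i:ℕ) < 3) (v : V m) :
    tri (flip i v) = flipT ⟨(i:ℕ), h⟩ (tri v) := by
  interval_cases hi : (i : ℕ)
  · have : i = i0 := by rw [Fin.ext_iff]; simp [i0, hi]
    subst this
    unfold tri flipT
    rw [flip_apply_self, flip_apply_ne (by simp [i0, i1, Fin.ext_iff]),
      flip_apply_ne (by simp [i0, i2, Fin.ext_iff])]
  · have : i = i1 := by rw [Fin.ext_iff]; simp [i1, hi]
    subst this
    unfold tri flipT
    rw [flip_apply_self, flip_apply_ne (by simp [i0, i1, Fin.ext_iff]),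
      flip_apply_ne (by simp [i1, i2, Fin.ext_iff])]
  · have : i = i2 := by rw [Fin.ext_iff]; simp [i2, hi]
    subst this
    unfold tri flipT
    rw [flip_apply_self, flip_apply_ne (by simp [i0, i2, Fin.ext_iff]),
      flip_apply_ne (by simp [i1, i2, Fin.ext_iff])]

def emb3 : Fin 3 → Fin (m+3) := fun k => ⟨(k:ℕ), by omega⟩

lemma emb3_injective : Function.Injective (emb3 (m := m)) := by
  intro a b h
  rw [Fin.ext_iff] at h ⊢
  exact h

lemma tri_flip_emb3 (k : Fin 3) (v : V m) : tri (flip (emb3 k) v) = flipT k (tri v) := by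
  rw [tri_flip_lt (show ((emb3 k : Fin (m+3)):ℕ) < 3 from k.isLt)]
  congr 1

/-- The deleted-edge relation (directed form). -/
def del (c : Bool) (v w : V m) : Prop := mOf (xor c (par v)) (tri v) = some (tri w)

instance (c : Bool) (v w : V m) : Decidable (del c v w) := by unfold del; infer_instance

def Gr (m : ℕ) (c : Bool) : SimpleGraph (V m) where
  Adj v w := hammingDist v w = 1 ∧ ¬ del c v w ∧ ¬ del c w v
  symm := ⟨fun v w (h : hammingDist v w = 1 ∧ ¬ del c v w ∧ ¬ del c w v) =>
    ⟨by rw [hammingDist_comm]; exact h.1, h.2.2, h.2.1⟩⟩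
  loopless := ⟨fun v (h : hammingDist v v = 1 ∧ ¬ del c v v ∧ ¬ del c v v) => by
    have := h.1
    simp [hammingDist_self] at this⟩

instance (m : ℕ) (c : Bool) : DecidableRel (Gr m c).Adj := fun v w =>
  inferInstanceAs (Decidable (hammingDist v w = 1 ∧ ¬ del c v w ∧ ¬ del c w v))

lemma del_flip_ge {i : Fin (m+3)} (h : 3 ≤ (i:ℕ)) (c : Bool) (v : V m) :
    ¬ del c v (flip i v) := by
  unfold del
  rw [tri_flip_ge h]
  exact mOf_ne_self _ _

lemma del_symm (c : Bool) {v w : V m} (h : hammingDist v w = 1) :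
    del c v w ↔ del c w v := by
  obtain ⟨i, rfl⟩ := hamming_one_iff.1 h
  by_cases h3 : (i:ℕ) < 3
  · have hi : i = emb3 ⟨(i:ℕ), h3⟩ := Fin.ext rfl
    unfold del
    rw [hi, tri_flip_emb3, par_flip_lt (by simpa [emb3] using h3)]
    exact mOf_symm _ _ _
  · have hge : 3 ≤ (i:ℕ) := le_of_not_gt h3
    unfold del
    rw [tri_flip_ge hge]
    simp [mOf_ne_self]

lemma delset_eq (c : Bool) (v : V m) :
    (Finset.univ.filter fun i : Fin (m+3) => del c v (flip i v)) =
    (Finset.univ.filter fun k : Fin 3 =>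
      mOf (xor c (par v)) (tri v) = some (flipT k (tri v))).image emb3 := by
  ext i
  simp only [Finset.mem_filter, Finset.mem_univ, true_and, Finset.mem_image]
  constructor
  · intro hd
    by_cases h3 : (i:ℕ) < 3
    · have hi : i = emb3 ⟨(i:ℕ), h3⟩ := Fin.ext rfl
      refine ⟨⟨(i:ℕ), h3⟩, ?_, hi.symm⟩
      unfold del at hd
      rwa [hi, tri_flip_emb3] at hd
    · exact absurd hd (del_flip_ge (le_of_not_gt h3) c v)
  · rintro ⟨k, hk, rfl⟩
    unfold del
    rwa [tri_flip_emb3]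

lemma card_delset (c : Bool) (v : V m) :
    (Finset.univ.filter fun i : Fin (m+3) => del c v (flip i v)).card
      = if (mOf (xor c (par v)) (tri v)).isSome then 1 else 0 := by
  rw [delset_eq, Finset.card_image_of_injective _ emb3_injective, card_filterT]

lemma flip_inj (v : V m) : Function.Injective (fun i => flip i v) := by
  intro i j h
  by_contra hne
  have h1 : flip i v i = flip j v i := congrFun h i
  rw [flip_apply_self, flip_apply_ne (fun he : i = j => hne he) v] at h1
  cases hv : v i <;> rw [hv] at h1 <;> simp at h1

lemma neighborFinset_eq (c : Bool) (v : V m) :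
    (Gr m c).neighborFinset v =
      (Finset.univ.filter fun i : Fin (m+3) => ¬ del c v (flip i v)).image (fun i => flip i v) := by
  ext w
  simp only [SimpleGraph.mem_neighborFinset, Finset.mem_image, Finset.mem_filter,
    Finset.mem_univ, true_and]
  constructor
  · rintro ⟨h1, h2, h3⟩
    obtain ⟨i, rfl⟩ := hamming_one_iff.1 h1
    exact ⟨i, h2, rfl⟩
  · rintro ⟨i, hnd, rfl⟩
    refine ⟨hamming_flip i v, hnd, fun hd => hnd ((del_symm c (hamming_flip i v)).2 hd)⟩

lemma degree_Gr (c : Bool) (v : V m) :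
    (Gr m c).degree v = (m+3) - (if (mOf (xor c (par v)) (tri v)).isSome then 1 else 0) := by
  rw [← SimpleGraph.card_neighborFinset_eq_degree, neighborFinset_eq,
    Finset.card_image_of_injective _ (flip_inj v)]
  have hsplit := Finset.card_filter_add_card_filter_not
    (s := (Finset.univ : Finset (Fin (m+3)))) (p := fun i => del c v (flip i v))
  rw [card_delset] at hsplit
  have hcard : (Finset.univ : Finset (Fin (m+3))).card = m + 3 := by simp
  rw [hcard] at hsplit
  omega

/-! ### Counting -/

def Pb (c : Bool) (v : V m) : Bool := v i0 == xor (xor c (par v)) (v i2)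
def Qb (v : V m) : Bool := v i1 == v i2

lemma not_beq : ∀ a b : Bool, ((!a) == b) = !(a == b) := by decide

lemma i1_ne_i0 : (i1 : Fin (m+3)) ≠ i0 := by simp [i0, i1, Fin.ext_iff]
lemma i2_ne_i0 : (i2 : Fin (m+3)) ≠ i0 := by simp [i0, i2, Fin.ext_iff]
lemma i0_ne_i1 : (i0 : Fin (m+3)) ≠ i1 := by simp [i0, i1, Fin.ext_iff]
lemma i2_ne_i1 : (i2 : Fin (m+3)) ≠ i1 := by simp [i1, i2, Fin.ext_iff]

lemma Pb_flip0 (c : Bool) (v : V m) : Pb c (flip i0 v) = !(Pb c v) := by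
  unfold Pb
  rw [par_flip_lt (show ((i0 : Fin (m+3)):ℕ) < 3 by simp [i0]) v, flip_apply_self,
    flip_apply_ne i2_ne_i0, not_beq]

lemma Qb_flip0 (v : V m) : Qb (flip i0 v) = Qb v := by
  unfold Qb
  rw [flip_apply_ne i1_ne_i0, flip_apply_ne i2_ne_i0]

lemma Pb_flip1 (c : Bool) (v : V m) : Pb c (flip i1 v) = Pb c v := by
  unfold Pb
  rw [par_flip_lt (show ((i1 : Fin (m+3)):ℕ) < 3 by simp [i1]) v,
    flip_apply_ne i0_ne_i1, flip_apply_ne i2_ne_i1]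

lemma Qb_flip1 (v : V m) : Qb (flip i1 v) = !(Qb v) := by
  unfold Qb
  rw [flip_apply_self, flip_apply_ne i2_ne_i1, not_beq]

def cardPQ (m : ℕ) (c s t : Bool) : ℕ :=
  (Finset.univ.filter fun v : V m => Pb c v = s ∧ Qb v = t).card

lemma cardPQ_flip0 (c s t : Bool) : cardPQ m c s t = cardPQ m c (!s) t := by
  unfold cardPQ
  apply Finset.card_bij' (fun v _ => flip i0 v) (fun v _ => flip i0 v)
  · intro a ha
    simp only [Finset.mem_filter, Finset.mem_univ, true_and] at ha ⊢
    rw [Pb_flip0, Qb_flip0, ha.1, ha.2]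
    exact ⟨rfl, rfl⟩
  · intro a ha
    simp only [Finset.mem_filter, Finset.mem_univ, true_and] at ha ⊢
    rw [Pb_flip0, Qb_flip0, ha.1, ha.2]
    simp
  · intro a _; exact flip_flip _ _
  · intro a _; exact flip_flip _ _

lemma cardPQ_flip1 (c s t : Bool) : cardPQ m c s t = cardPQ m c s (!t) := by
  unfold cardPQ
  apply Finset.card_bij' (fun v _ => flip i1 v) (fun v _ => flip i1 v)
  · intro a ha
    simp only [Finset.mem_filter, Finset.mem_univ, true_and] at ha ⊢
    rw [Pb_flip1, Qb_flip1, ha.1, ha.2]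
    exact ⟨rfl, rfl⟩
  · intro a ha
    simp only [Finset.mem_filter, Finset.mem_univ, true_and] at ha ⊢
    rw [Pb_flip1, Qb_flip1, ha.1, ha.2]
    simp
  · intro a _; exact flip_flip _ _
  · intro a _; exact flip_flip _ _

lemma cardPQ_const (c : Bool) : ∀ s t : Bool, cardPQ m c s t = cardPQ m c true true := by
  intro s t
  have h0 := cardPQ_flip0 (m := m) c false
  have h1 := cardPQ_flip1 (m := m) c true false
  simp only [Bool.not_false] at h0 h1
  cases s <;> cases t
  · rw [h0 false, h1]
  · rw [h0 true]
  · rw [h1]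
  · rfl

lemma card_univ_V : (Finset.univ : Finset (V m)).card = 2^(m+3) := by
  rw [Finset.card_univ]
  simp [Fintype.card_fun]

lemma cardPQ_sum (c : Bool) :
    cardPQ m c true true + cardPQ m c true false
      + (cardPQ m c false true + cardPQ m c false false) = 2^(m+3) := by
  have hP : ∀ s : Bool, (Finset.univ.filter fun v : V m => Pb c v = s).card
      = cardPQ m c s true + cardPQ m c s false := by
    intro s
    have h := Finset.card_filter_add_card_filter_not
      (s := Finset.univ.filter fun v : V m => Pb c v = s) (p := fun v => Qb v = true)
    rw [Finset.filter_filter, Finset.filter_filter] at h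
    have e2 : (Finset.univ.filter fun v : V m => Pb c v = s ∧ ¬ Qb v = true)
        = Finset.univ.filter fun v : V m => Pb c v = s ∧ Qb v = false := by
      apply Finset.filter_congr
      intro v _
      simp [Bool.not_eq_true]
    rw [e2] at h
    unfold cardPQ
    omega
  have hT := Finset.card_filter_add_card_filter_not
    (s := (Finset.univ : Finset (V m))) (p := fun v => Pb c v = true)
  have e3 : (Finset.univ.filter fun v : V m => ¬ Pb c v = true)
      = Finset.univ.filter fun v : V m => Pb c v = false := by
    apply Finset.filter_congr
    intro v _
    simp [Bool.not_eq_true]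
  rw [e3, card_univ_V, hP true, hP false] at hT
  omega

lemma card_uncovered (c : Bool) :
    (Finset.univ.filter fun v : V m => mOf (xor c (par v)) (tri v) = none).card
      = 2^(m+1) := by
  have heq : (Finset.univ.filter fun v : V m => mOf (xor c (par v)) (tri v) = none)
      = Finset.univ.filter fun v : V m => Pb c v = true ∧ Qb v = true := by
    apply Finset.filter_congr
    intro v _
    rw [mOf_none_iff]
    unfold tri Pb Qb
    simp
  rw [heq]
  have hsum := cardPQ_sum (m := m) c
  have h1 := cardPQ_const (m := m) c true false
  have h2 := cardPQ_const (m := m) c false true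
  have h3 := cardPQ_const (m := m) c false false
  have hpow : (2:ℕ)^(m+3) = 4 * 2^(m+1) := by ring
  show cardPQ m c true true = 2^(m+1)
  omega

lemma card_covered (c : Bool) :
    (Finset.univ.filter fun v : V m => (mOf (xor c (par v)) (tri v)).isSome).card
      = 3 * 2^(m+1) := by
  have heq : (Finset.univ.filter fun v : V m => (mOf (xor c (par v)) (tri v)).isSome)
      = Finset.univ.filter fun v : V m => ¬ mOf (xor c (par v)) (tri v) = none := by
    apply Finset.filter_congr
    intro v _
    simp [Option.isSome_iff_ne_none]
  have hsplit := Finset.card_filter_add_card_filter_not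
    (s := (Finset.univ : Finset (V m))) (p := fun v => mOf (xor c (par v)) (tri v) = none)
  rw [card_uncovered, card_univ_V] at hsplit
  rw [heq]
  have hpow : (2:ℕ)^(m+3) = 4 * 2^(m+1) := by ring
  omega

lemma edge_card (c : Bool) : (Gr m c).edgeFinset.card = 2^m * (4*m + 9) := by
  have hdeg := SimpleGraph.sum_degrees_eq_twice_card_edges (Gr m c)
  have hb : ∑ v : V m, (if (mOf (xor c (par v)) (tri v)).isSome then 1 else 0)
      = (Finset.univ.filter fun v : V m => (mOf (xor c (par v)) (tri v)).isSome).card := by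
    rw [Finset.sum_boole, Nat.cast_id]
  have hsum : ∑ v : V m, (Gr m c).degree v
      + (Finset.univ.filter fun v : V m => (mOf (xor c (par v)) (tri v)).isSome).card
      = (m+3) * 2^(m+3) := by
    rw [← hb, ← Finset.sum_add_distrib]
    have hpt : ∀ v : V m, (Gr m c).degree v
        + (if (mOf (xor c (par v)) (tri v)).isSome then 1 else 0) = m + 3 := by
      intro v
      rw [degree_Gr]
      split <;> omega
    rw [Finset.sum_congr rfl (fun v _ => hpt v), Finset.sum_const, Finset.card_univ]
    simp [Fintype.card_fun, mul_comm]
  rw [card_covered, hdeg] at hsum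
  have hexp : (m+3) * 2^(m+3) = 2 * (2^m * (4*m+9)) + 3 * 2^(m+1) := by ring
  rw [hexp] at hsum
  have h2 : 2 * (Gr m c).edgeFinset.card = 2 * (2^m * (4*m+9)) := Nat.add_right_cancel hsum
  exact Nat.eq_of_mul_eq_mul_left (by norm_num) h2

/-! ### Freeness -/

lemma uncovered_of_degree_ge (c : Bool) (v : V m) (h : m+3 ≤ (Gr m c).degree v) :
    mOf (xor c (par v)) (tri v) = none := by
  rw [degree_Gr] at h
  rcases hs : mOf (xor c (par v)) (tri v) with _ | s
  · rfl
  · rw [hs] at h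
    simp only [Option.isSome_some, if_true] at h
    omega

lemma not_adj_uncovered (c : Bool) {v w : V m} (h : hammingDist v w = 1)
    (hv : mOf (xor c (par v)) (tri v) = none)
    (hw : mOf (xor c (par w)) (tri w) = none) : False := by
  obtain ⟨i, rfl⟩ := hamming_one_iff.1 h
  by_cases h3 : (i:ℕ) < 3
  · rw [par_flip_lt h3] at hw
    have hi : i = emb3 ⟨(i:ℕ), h3⟩ := Fin.ext rfl
    rw [hi, tri_flip_emb3] at hw
    exact mOf_not_adj _ _ _ ⟨hv, hw⟩
  · have hge := le_of_not_gt h3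
    rw [par_flip_ge hge, tri_flip_ge hge] at hw
    have hx : xor c (!par v) = !(xor c (par v)) := by cases c <;> cases par v <;> rfl
    rw [hx] at hw
    exact mOf_not_both _ _ ⟨hv, hw⟩

lemma not_contains (c : Bool) : ¬ Contains (Gr m c) (doubleStar (m+2) (m+2)) := by
  rintro ⟨f, hf⟩
  have hadj : (Gr m c).Adj (f (Sum.inl none)) (f (Sum.inr none)) := by
    apply hf
    rw [doubleStar, SimpleGraph.fromRel_adj]
    exact ⟨by simp, Or.inl (Or.inl ⟨rfl, rfl⟩)⟩
  have keydeg : ∀ (x : V m) (g : Option (Fin (m+2)) → Option (Fin (m+2)) ⊕ Option (Fin (m+2))),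
      Function.Injective g → (∀ o, (Gr m c).Adj x (f (g o))) → m+3 ≤ (Gr m c).degree x := by
    intro x g hg hadjall
    have hsub : Finset.univ.image (fun o => f (g o)) ⊆ (Gr m c).neighborFinset x := by
      intro w hw
      simp only [Finset.mem_image, Finset.mem_univ, true_and] at hw
      obtain ⟨o, rfl⟩ := hw
      rw [SimpleGraph.mem_neighborFinset]
      exact hadjall o
    have hcard : (Finset.univ.image (fun o : Option (Fin (m+2)) => f (g o))).card = m + 3 := by
      rw [Finset.card_image_of_injective _
        (show Function.Injective (fun o => f (g o)) from fun a b hab => hg (f.injective hab)),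
        Finset.card_univ]
      simp
    calc m + 3 = _ := hcard.symm
      _ ≤ ((Gr m c).neighborFinset x).card := Finset.card_le_card hsub
      _ = (Gr m c).degree x := rfl
  have hu : m+3 ≤ (Gr m c).degree (f (Sum.inl none)) := by
    apply keydeg _ (fun o => Option.elim o (Sum.inr none) (fun i => Sum.inl (some i)))
    · intro a b hab
      cases a <;> cases b <;> simp_all
    · intro o
      cases o with
      | none => exact hadj
      | some i =>
        apply hf
        rw [doubleStar, SimpleGraph.fromRel_adj]
        exact ⟨by simp, Or.inl (Or.inr (Or.inl ⟨rfl, ⟨i, rfl⟩⟩))⟩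
  have hv : m+3 ≤ (Gr m c).degree (f (Sum.inr none)) := by
    apply keydeg _ (fun o => Option.elim o (Sum.inl none) (fun j => Sum.inr (some j)))
    · intro a b hab
      cases a <;> cases b <;> simp_all
    · intro o
      cases o with
      | none => exact hadj.symm
      | some j =>
        apply hf
        rw [doubleStar, SimpleGraph.fromRel_adj]
        exact ⟨by simp, Or.inl (Or.inr (Or.inr ⟨rfl, ⟨j, rfl⟩⟩))⟩
  exact not_adj_uncovered c hadj.1 (uncovered_of_degree_ge c _ hu)
    (uncovered_of_degree_ge c _ hv)

lemma not_both (v : V m) :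
    ¬((Gr m false).degree v = m+3 ∧ (Gr m true).degree v = m+3) := by
  rintro ⟨h0, h1⟩
  have u0 := uncovered_of_degree_ge false v (le_of_eq h0.symm)
  have u1 := uncovered_of_degree_ge true v (le_of_eq h1.symm)
  rw [Bool.false_xor] at u0
  rw [Bool.true_xor] at u1
  exact mOf_not_both _ _ ⟨u0, u1⟩

lemma ncard_neighborSet (c : Bool) (v : V m) :
    ((Gr m c).neighborSet v).ncard = (Gr m c).degree v := by
  rw [Set.ncard_eq_toFinset_card']
  rfl

lemma ncard_edgeSet (c : Bool) : ((Gr m c).edgeSet).ncard = (Gr m c).edgeFinset.card := by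
  rw [← SimpleGraph.coe_edgeFinset, Set.ncard_coe_finset]

end Stmt5Aux

/-- for `n ≥ 3` there are two `S_{n-1,n-1}`-free subgraphs of `Q_n`,
each with `2^{n-3}(4n-3)` edges, such that no vertex has degree `n` in both. -/
theorem stmt5 (n : ℕ) (hn : 3 ≤ n) :
    ∃ G G' : SimpleGraph (Fin n → Bool),
      G ≤ cube n ∧ G' ≤ cube n ∧
      ¬ Contains G (doubleStar (n - 1) (n - 1)) ∧
      ¬ Contains G' (doubleStar (n - 1) (n - 1)) ∧
      G.edgeSet.ncard = 2 ^ (n - 3) * (4 * n - 3) ∧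
      G'.edgeSet.ncard = 2 ^ (n - 3) * (4 * n - 3) ∧
      ∀ v, ¬ ((G.neighborSet v).ncard = n ∧ (G'.neighborSet v).ncard = n) := by
  obtain ⟨m, rfl⟩ : ∃ m, n = m + 3 := ⟨n - 3, by omega⟩
  have h1 : m + 3 - 1 = m + 2 := by omega
  have h3 : m + 3 - 3 = m := by omega
  have h43 : 4 * (m + 3) - 3 = 4 * m + 9 := by omega
  rw [h1, h3, h43]
  refine ⟨Stmt5Aux.Gr m false, Stmt5Aux.Gr m true, fun v w h => h.1, fun v w h => h.1,
    Stmt5Aux.not_contains false, Stmt5Aux.not_contains true, ?_, ?_, ?_⟩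
  · rw [Stmt5Aux.ncard_edgeSet, Stmt5Aux.edge_card]
  · rw [Stmt5Aux.ncard_edgeSet, Stmt5Aux.edge_card]
  · intro v hv
    rw [Stmt5Aux.ncard_neighborSet, Stmt5Aux.ncard_neighborSet] at hv
    exact Stmt5Aux.not_both v hv
end

section
/- Let G be a subgraph of Q_3 with at least 10 edges and let S be a set of four vertices of G of degree 3. Then S cannot contain both the all-zeros vertex and the all-ones vertex, i.e., at most one vertex of S lies in S_0 ∪ S_3, unless G contains S_{2,2}. -/
open SimpleGraph

instance : DecidableRel (cube 3).Adj := fun a b => decidable_of_iff (hammingDist a b = 1) Iff.rfl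

instance : DecidableRel (doubleStar 2 2).Adj := fun a b =>
  decidable_of_iff (a ≠ b ∧ (((a = Sum.inl none ∧ b = Sum.inr none) ∨
    (a = Sum.inl none ∧ ∃ i, b = Sum.inl (some i)) ∨
    (a = Sum.inr none ∧ ∃ j, b = Sum.inr (some j))) ∨
    ((b = Sum.inl none ∧ a = Sum.inr none) ∨
    (b = Sum.inl none ∧ ∃ i, a = Sum.inl (some i)) ∨
    (b = Sum.inr none ∧ ∃ j, a = Sum.inr (some j))))) Iff.rfl

def flipB (u : Fin 3 → Bool) (i : Fin 3) : Fin 3 → Bool := Function.update u i (!(u i))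

def F (u : Fin 3 → Bool) (i : Fin 3) : Option (Fin 2) ⊕ Option (Fin 2) → (Fin 3 → Bool)
  | Sum.inl none => u
  | Sum.inr none => flipB u i
  | Sum.inl (some 0) => flipB u (i+1)
  | Sum.inl (some 1) => flipB u (i+2)
  | Sum.inr (some 0) => flipB (flipB u i) (i+1)
  | Sum.inr (some 1) => flipB (flipB u i) (i+2)

lemma lemA : ∀ u v : Fin 3 → Bool, hammingDist u v = 1 → ∃ i, v = flipB u i := by decide

lemma lemB : ∀ (u : Fin 3 → Bool) (i : Fin 3), Function.Injective (F u i) ∧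
    ∀ a b, (doubleStar 2 2).Adj a b → (cube 3).Adj (F u i a) (F u i b) := by decide

lemma lemC : ∀ u : Fin 3 → Bool, ((cube 3).neighborSet u).toFinset.card = 3 := by decide

lemma lemD : ∀ x : Fin 3 → Bool, x ≠ (fun _ => false) → x ≠ (fun _ => true) →
    hammingDist x (fun _ => false) = 1 ∨ hammingDist x (fun _ => true) = 1 := by decide

lemma lemE : ∀ a b, (doubleStar 2 2).Adj a b →
    a = Sum.inl none ∨ a = Sum.inr none ∨ b = Sum.inl none ∨ b = Sum.inr none := by decide

lemma full {G : SimpleGraph (Fin 3 → Bool)} (hG : G ≤ cube 3) {u : Fin 3 → Bool}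
    (hu : (G.neighborSet u).ncard = 3) : ∀ w, (cube 3).Adj u w → G.Adj u w := by
  have hsub : G.neighborSet u ⊆ (cube 3).neighborSet u := fun w hw => hG hw
  have hc : ((cube 3).neighborSet u).ncard = 3 := by
    rw [Set.ncard_eq_toFinset_card']; exact lemC u
  have heq : G.neighborSet u = (cube 3).neighborSet u :=
    Set.eq_of_subset_of_ncard_le hsub (by rw [hc, hu]) (Set.toFinite _)
  intro w hw
  have : w ∈ G.neighborSet u := heq ▸ hw
  exact this

lemma Contains_of {G : SimpleGraph (Fin 3 → Bool)} (hG : G ≤ cube 3) {u v : Fin 3 → Bool}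
    (hu : (G.neighborSet u).ncard = 3) (hv : (G.neighborSet v).ncard = 3)
    (huv : hammingDist u v = 1) : Contains G (doubleStar 2 2) := by
  obtain ⟨i, hi⟩ := lemA u v huv
  refine ⟨⟨F u i, (lemB u i).1⟩, ?_⟩
  intro a b hab
  have hcube := (lemB u i).2 a b hab
  have hfu : ∀ w, (cube 3).Adj u w → G.Adj u w := full hG hu
  have hfv : ∀ w, (cube 3).Adj v w → G.Adj v w := full hG hv
  have hFl : F u i (Sum.inl none) = u := rfl
  have hFr : F u i (Sum.inr none) = v := hi ▸ rfl
  show G.Adj (F u i a) (F u i b)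
  rcases lemE a b hab with h | h | h | h
  · rw [h] at hcube ⊢; rw [hFl] at hcube ⊢; exact hfu _ hcube
  · rw [h] at hcube ⊢; rw [hFr] at hcube ⊢; exact hfv _ hcube
  · rw [h] at hcube ⊢; rw [hFl] at hcube ⊢; exact (hfu _ hcube.symm).symm
  · rw [h] at hcube ⊢; rw [hFr] at hcube ⊢; exact (hfv _ hcube.symm).symm


/-- if `G ≤ Q_3` has at least 10 edges, `S` is a set of four
vertices of degree 3 and `G` is `S_{2,2}`-free, then `S` cannot contain both the
all-zeros vertex and the all-ones vertex. -/
theorem stmt14 (G : SimpleGraph (Fin 3 → Bool)) (hG : G ≤ cube 3)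
    (he : 10 ≤ G.edgeSet.ncard) (S : Finset (Fin 3 → Bool))
    (hcard : S.card = 4) (hdeg : ∀ v ∈ S, (G.neighborSet v).ncard = 3)
    (hfree : ¬ Contains G (doubleStar 2 2)) :
    ¬ ((fun _ => false) ∈ S ∧ (fun _ => true) ∈ S) := by
  rintro ⟨h0, h1⟩
  have hne : (fun _ => true : Fin 3 → Bool) ≠ (fun _ => false) := by decide
  have h2 : 0 < ((S.erase (fun _ => false)).erase (fun _ => true)).card := by
    rw [Finset.card_erase_of_mem (Finset.mem_erase.mpr ⟨hne, h1⟩),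
      Finset.card_erase_of_mem h0, hcard]
    omega
  obtain ⟨x, hx⟩ := Finset.card_pos.mp h2
  obtain ⟨hx1, hx0, hxS⟩ : x ≠ (fun _ => true) ∧ x ≠ (fun _ => false) ∧ x ∈ S := by
    have := Finset.mem_erase.mp hx
    have := Finset.mem_erase.mp this.2
    exact ⟨(Finset.mem_erase.mp hx).1, this.1, this.2⟩
  have hdx := hdeg x hxS
  rcases lemD x hx0 hx1 with h | h
  · exact hfree (Contains_of hG hdx (hdeg _ h0) h)
  · exact hfree (Contains_of hG hdx (hdeg _ h1) h)
end
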